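/- For every real c > 2.774 there exists an integer ℓ_c such that, with high probability as n → ∞, for every ℓ ≥ ℓ_c there is no graph homomorphism from G_{n,c/n} to the cycle C_{2ℓ+1}. -/

import Mathlib

set_option maxHeartbeats 1000000


open Filter SimpleGraph

open scoped Classical in
/-- The probability, under the Erdős–Rényi random graph `G_{n,p}` on vertex set `Fin n`
(each of the `n.choose 2` potential edges present independently with probability `p`),
that the random graph satisfies the property `P`. -/
noncomputable def erProb (n : ℕ) (p : ℝ) (P : SimpleGraph (Fin n) → Prop) : ℝ :=
  ∑ G : SimpleGraph (Fin n),
    if P G then p ^ G.edgeSet.ncard * (1 - p) ^ (n.choose 2 - G.edgeSet.ncard) else 0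


namespace ERhom

open scoped Classical

/-- the set of potential edges -/
noncomputable def pairs (n : ℕ) : Finset (Sym2 (Fin n)) :=
  Finset.univ.filter (fun e => ¬ e.IsDiag)

lemma pairs_card (n : ℕ) : (pairs n).card = n.choose 2 := by
  classical
  rw [pairs, ← Fintype.card_subtype]
  simpa using Sym2.card_subtype_not_diag (α := Fin n)

lemma edgeFinset_subset_pairs {n : ℕ} (G : SimpleGraph (Fin n)) :
    G.edgeFinset ⊆ pairs n := by
  intro e he
  simp only [pairs, Finset.mem_filter, Finset.mem_univ, true_and]
  exact G.not_isDiag_of_mem_edgeSet (by simpa using he)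

lemma ncard_eq_card {n : ℕ} (G : SimpleGraph (Fin n)) :
    G.edgeSet.ncard = G.edgeFinset.card := by
  rw [Set.ncard_eq_toFinset_card']
  convert rfl
  ext; simp

/-- transport sums over graphs to sums over subsets of `pairs n` -/
lemma sum_graphs_eq {n : ℕ} (F : Finset (Sym2 (Fin n)) → ℝ) :
    ∑ G : SimpleGraph (Fin n), F G.edgeFinset = ∑ s ∈ (pairs n).powerset, F s := by
  classical
  refine Finset.sum_bij' (fun G _ => G.edgeFinset)
    (fun s _ => SimpleGraph.fromEdgeSet ↑s) ?_ ?_ ?_ ?_ ?_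
  · intro G _
    exact Finset.mem_powerset.2 (edgeFinset_subset_pairs G)
  · intro s _; exact Finset.mem_univ _
  · intro G _
    simp [SimpleGraph.edgeFinset]
  · intro s hs
    have hnd : ∀ e ∈ s, ¬ e.IsDiag := by
      intro e he
      have := Finset.mem_powerset.1 hs he
      simpa [pairs] using this
    have h1 : (SimpleGraph.fromEdgeSet (↑s : Set (Sym2 (Fin n)))).edgeSet = ↑s := by
      rw [SimpleGraph.edgeSet_fromEdgeSet]
      ext e
      simp only [Set.mem_diff, Finset.mem_coe, Set.mem_setOf_eq, and_iff_left_iff_imp]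
      exact fun he => hnd e he
    simp [SimpleGraph.edgeFinset, h1]
  · intro G _; rfl


/-- weight of a graph with `k` edges -/
noncomputable def wt (n : ℕ) (p : ℝ) (k : ℕ) : ℝ := p ^ k * (1 - p) ^ (n.choose 2 - k)

/-- The moment generating function identity. -/
lemma sum_mgf {n : ℕ} (p lam : ℝ) (I : Finset (Sym2 (Fin n))) (hI : I ⊆ pairs n) :
    ∑ G : SimpleGraph (Fin n), lam ^ (G.edgeFinset ∩ I).card * wt n p G.edgeFinset.card
      = (lam * p + (1 - p)) ^ I.card * (p + (1 - p)) ^ (n.choose 2 - I.card) := by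
  classical
  rw [sum_graphs_eq (fun s => lam ^ (s ∩ I).card * wt n p s.card)]
  have key := Finset.prod_add (fun e : Sym2 (Fin n) => if e ∈ I then lam * p else p)
    (fun _ => 1 - p) (pairs n)
  have hL : ∏ e ∈ pairs n, ((if e ∈ I then lam * p else p) + (1 - p))
      = (lam * p + (1 - p)) ^ I.card * (p + (1 - p)) ^ (n.choose 2 - I.card) := by
    have hc : ∀ e ∈ pairs n, ((if e ∈ I then lam * p else p) + (1 - p))
        = (if e ∈ I then lam * p + (1 - p) else p + (1 - p)) := by
      intro e _; split <;> ring
    rw [Finset.prod_congr rfl hc, Finset.prod_ite, Finset.prod_const, Finset.prod_const,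
      Finset.filter_mem_eq_inter, Finset.inter_eq_right.2 hI]
    congr 1
    have hfilt : (pairs n).filter (fun e => e ∉ I) = pairs n \ I := by
      ext e; simp
    rw [hfilt, Finset.card_sdiff_of_subset hI, pairs_card n]
  have hR : ∀ t ∈ (pairs n).powerset,
      (∏ e ∈ t, (if e ∈ I then lam * p else p)) * ∏ _e ∈ pairs n \ t, (1 - p)
        = lam ^ (t ∩ I).card * wt n p t.card := by
    intro t ht
    have htp := Finset.mem_powerset.1 ht
    have hfilt : t.filter (fun e => e ∉ I) = t \ I := by ext e; simp
    rw [Finset.prod_ite, Finset.prod_const, Finset.prod_const, Finset.prod_const,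
      Finset.filter_mem_eq_inter, hfilt, Finset.card_sdiff_of_subset htp, pairs_card n]
    have hab : (t ∩ I).card + (t \ I).card = t.card := Finset.card_inter_add_card_sdiff t I
    rw [wt, ← hab, pow_add, mul_pow]
    ring
  calc ∑ t ∈ (pairs n).powerset, lam ^ (t ∩ I).card * wt n p t.card
      = ∑ t ∈ (pairs n).powerset,
          (∏ e ∈ t, (if e ∈ I then lam * p else p)) * ∏ _e ∈ pairs n \ t, (1 - p) :=
        (Finset.sum_congr rfl hR).symm
    _ = ∏ e ∈ pairs n, ((if e ∈ I then lam * p else p) + (1 - p)) := key.symm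
    _ = _ := hL

lemma sum_wt {n : ℕ} (p : ℝ) :
    ∑ G : SimpleGraph (Fin n), wt n p G.edgeFinset.card = 1 := by
  have := sum_mgf (n := n) p 1 ∅ (Finset.empty_subset _)
  simpa using this


open scoped Classical

/-- real indicator of a proposition -/
noncomputable def ind (P : Prop) : ℝ := if P then 1 else 0

lemma ind_nonneg (P : Prop) : 0 ≤ ind P := by
  rw [ind]; split <;> norm_num

lemma ind_of_true {P : Prop} (h : P) : ind P = 1 := if_pos h

lemma ind_of_false {P : Prop} (h : ¬ P) : ind P = 0 := if_neg h

lemma ind_le_one (P : Prop) : ind P ≤ 1 := by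
  rw [ind]; split <;> norm_num

variable {n : ℕ} {p : ℝ}

lemma wt_nonneg (hp0 : 0 ≤ p) (hp1 : p ≤ 1) (k : ℕ) : 0 ≤ wt n p k :=
  mul_nonneg (pow_nonneg hp0 _) (pow_nonneg (by linarith) _)

lemma erProb_eq (P : SimpleGraph (Fin n) → Prop) :
    erProb n p P = ∑ G : SimpleGraph (Fin n), ind (P G) * wt n p G.edgeFinset.card := by
  rw [erProb]
  refine Finset.sum_congr rfl fun G _ => ?_
  by_cases h : P G
  · rw [if_pos h, ind_of_true h, one_mul, wt, ncard_eq_card]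
  · rw [if_neg h, ind_of_false h, zero_mul]

lemma erProb_nonneg (hp0 : 0 ≤ p) (hp1 : p ≤ 1) (P : SimpleGraph (Fin n) → Prop) :
    0 ≤ erProb n p P := by
  rw [erProb_eq]
  exact Finset.sum_nonneg fun G _ => mul_nonneg (ind_nonneg _) (wt_nonneg hp0 hp1 _)

lemma erProb_mono (hp0 : 0 ≤ p) (hp1 : p ≤ 1) {P Q : SimpleGraph (Fin n) → Prop}
    (h : ∀ G, P G → Q G) : erProb n p P ≤ erProb n p Q := by
  rw [erProb_eq, erProb_eq]
  refine Finset.sum_le_sum fun G _ => ?_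
  by_cases hP : P G
  · rw [ind_of_true hP, ind_of_true (h G hP)]
  · rw [ind_of_false hP, zero_mul]
    exact mul_nonneg (ind_nonneg _) (wt_nonneg hp0 hp1 _)

lemma erProb_add_compl (P : SimpleGraph (Fin n) → Prop) :
    erProb n p P + erProb n p (fun G => ¬ P G) = 1 := by
  rw [erProb_eq, erProb_eq, ← Finset.sum_add_distrib, ← sum_wt (n := n) p]
  refine Finset.sum_congr rfl fun G _ => ?_
  by_cases h : P G
  · rw [ind_of_true h, ind_of_false (not_not_intro h)]; ring
  · rw [ind_of_false h, ind_of_true h]; ring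

lemma erProb_le_one (hp0 : 0 ≤ p) (hp1 : p ≤ 1) (P : SimpleGraph (Fin n) → Prop) :
    erProb n p P ≤ 1 := by
  have h1 := erProb_add_compl (n := n) (p := p) P
  have h2 := erProb_nonneg hp0 hp1 (fun G => ¬ P G)
  linarith

lemma erProb_or (hp0 : 0 ≤ p) (hp1 : p ≤ 1) (P Q : SimpleGraph (Fin n) → Prop) :
    erProb n p (fun G => P G ∨ Q G) ≤ erProb n p P + erProb n p Q := by
  rw [erProb_eq, erProb_eq, erProb_eq, ← Finset.sum_add_distrib]
  refine Finset.sum_le_sum fun G _ => ?_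
  have hw := wt_nonneg (n := n) hp0 hp1 G.edgeFinset.card
  have h1 := ind_nonneg (P G); have h2 := ind_nonneg (Q G)
  by_cases hP : P G
  · rw [ind_of_true (Or.inl hP), ind_of_true hP]
    nlinarith
  · by_cases hQ : Q G
    · rw [ind_of_true (Or.inr hQ), ind_of_true hQ]
      nlinarith
    · rw [ind_of_false (fun h => h.elim hP hQ), ind_of_false hP, ind_of_false hQ]
      norm_num

lemma erProb_exists {α : Type*} [Fintype α] (hp0 : 0 ≤ p) (hp1 : p ≤ 1)
    (Q : α → SimpleGraph (Fin n) → Prop) :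
    erProb n p (fun G => ∃ a, Q a G) ≤ ∑ a : α, erProb n p (Q a) := by
  rw [erProb_eq]
  have he : ∀ a : α, erProb n p (Q a)
      = ∑ G : SimpleGraph (Fin n), ind (Q a G) * wt n p G.edgeFinset.card :=
    fun a => erProb_eq _
  simp_rw [he]
  rw [Finset.sum_comm]
  refine Finset.sum_le_sum fun G _ => ?_
  by_cases h : ∃ a, Q a G
  · obtain ⟨a, ha⟩ := h
    rw [ind_of_true ⟨a, ha⟩, one_mul]
    have : ind (Q a G) * wt n p G.edgeFinset.card = wt n p G.edgeFinset.card := by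
      rw [ind_of_true ha, one_mul]
    refine le_trans (le_of_eq this.symm) ?_
    exact Finset.single_le_sum
      (f := fun b => ind (Q b G) * wt n p G.edgeFinset.card)
      (fun b _ => mul_nonneg (ind_nonneg _) (wt_nonneg hp0 hp1 _)) (Finset.mem_univ a)
  · rw [ind_of_false h, zero_mul]
    exact Finset.sum_nonneg fun b _ => mul_nonneg (ind_nonneg _) (wt_nonneg hp0 hp1 _)

lemma tail_upper (hp0 : 0 ≤ p) (hp1 : p ≤ 1) {I : Finset (Sym2 (Fin n))} (hI : I ⊆ pairs n)
    {lam : ℝ} (hlam : 1 ≤ lam) (u : ℕ) :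
    erProb n p (fun G => u ≤ (G.edgeFinset ∩ I).card)
      ≤ (lam * p + (1 - p)) ^ I.card / lam ^ u := by
  have hlam0 : (0:ℝ) < lam ^ u := pow_pos (by linarith) u
  rw [erProb_eq]
  have hb : ∀ G : SimpleGraph (Fin n),
      ind (u ≤ (G.edgeFinset ∩ I).card) * wt n p G.edgeFinset.card
        ≤ lam ^ (G.edgeFinset ∩ I).card * wt n p G.edgeFinset.card / lam ^ u := by
    intro G
    have h2 := wt_nonneg (n := n) hp0 hp1 G.edgeFinset.card
    by_cases h : u ≤ (G.edgeFinset ∩ I).card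
    · rw [ind_of_true h, one_mul, le_div_iff₀ hlam0]
      have h1 : lam ^ u ≤ lam ^ (G.edgeFinset ∩ I).card := pow_le_pow_right₀ hlam h
      nlinarith
    · rw [ind_of_false h, zero_mul]
      exact div_nonneg (mul_nonneg (pow_nonneg (by linarith) _) h2) hlam0.le
  refine le_trans (Finset.sum_le_sum fun G _ => hb G) ?_
  rw [← Finset.sum_div, sum_mgf p lam I hI]
  have h1 : p + (1 - p) = 1 := by ring
  rw [h1, one_pow, mul_one]

lemma tail_lower (hp0 : 0 ≤ p) (hp1 : p ≤ 1) {I : Finset (Sym2 (Fin n))} (hI : I ⊆ pairs n)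
    {mu : ℝ} (hmu0 : 0 < mu) (hmu1 : mu ≤ 1) (s : ℕ) :
    erProb n p (fun G => (G.edgeFinset ∩ I).card ≤ s)
      ≤ (mu * p + (1 - p)) ^ I.card / mu ^ s := by
  have hmus : (0:ℝ) < mu ^ s := pow_pos hmu0 s
  rw [erProb_eq]
  have hb : ∀ G : SimpleGraph (Fin n),
      ind ((G.edgeFinset ∩ I).card ≤ s) * wt n p G.edgeFinset.card
        ≤ mu ^ (G.edgeFinset ∩ I).card * wt n p G.edgeFinset.card / mu ^ s := by
    intro G
    have h2 := wt_nonneg (n := n) hp0 hp1 G.edgeFinset.card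
    by_cases h : (G.edgeFinset ∩ I).card ≤ s
    · rw [ind_of_true h, one_mul, le_div_iff₀ hmus]
      have h1 : mu ^ s ≤ mu ^ (G.edgeFinset ∩ I).card := pow_le_pow_of_le_one hmu0.le hmu1 h
      nlinarith
    · rw [ind_of_false h, zero_mul]
      exact div_nonneg (mul_nonneg (pow_nonneg hmu0.le _) h2) hmus.le
  refine le_trans (Finset.sum_le_sum fun G _ => hb G) ?_
  rw [← Finset.sum_div, sum_mgf p mu I hI]
  have h1 : p + (1 - p) = 1 := by ring
  rw [h1, one_pow, mul_one]



lemma four_mul_le (a b : ℕ) (h : a ≤ b) : 4 * (a * (b - a)) ≤ b ^ 2 := by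
  zify [h]
  nlinarith [sq_nonneg ((b : ℤ) - 2 * a)]

variable {n : ℕ}

/-- predicate on potential edges: both endpoints on the same side of the bipartition `A` -/
noncomputable def insideP (A : Finset (Fin n)) : Sym2 (Fin n) → Prop :=
  Sym2.lift ⟨fun u v => ((u ∈ A) ↔ (v ∈ A)), fun u v => propext iff_comm⟩

lemma insideP_mk (A : Finset (Fin n)) (u v : Fin n) :
    insideP A s(u, v) = ((u ∈ A) ↔ (v ∈ A)) :=
  Sym2.lift_mk _ u v

/-- inside pairs -/
noncomputable def Ins (A : Finset (Fin n)) : Finset (Sym2 (Fin n)) :=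
  (pairs n).filter (insideP A)

/-- crossing pairs -/
noncomputable def Crs (A : Finset (Fin n)) : Finset (Sym2 (Fin n)) :=
  (pairs n).filter (fun e => ¬ insideP A e)

lemma Ins_subset (A : Finset (Fin n)) : Ins A ⊆ pairs n := Finset.filter_subset _ _
lemma Crs_subset (A : Finset (Fin n)) : Crs A ⊆ pairs n := Finset.filter_subset _ _

lemma Ins_card_add_Crs_card (A : Finset (Fin n)) :
    (Ins A).card + (Crs A).card = n.choose 2 := by
  rw [Ins, Crs, Finset.card_filter_add_card_filter_not, pairs_card]

lemma edge_inter_Ins (A : Finset (Fin n)) (G : SimpleGraph (Fin n)) :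
    G.edgeFinset ∩ Ins A = G.edgeFinset.filter (insideP A) := by
  ext e
  simp only [Finset.mem_inter, Ins, Finset.mem_filter]
  exact ⟨fun ⟨h1, _, h3⟩ => ⟨h1, h3⟩, fun ⟨h1, h2⟩ => ⟨h1, ⟨edgeFinset_subset_pairs G h1, h2⟩⟩⟩

lemma edge_inter_Crs (A : Finset (Fin n)) (G : SimpleGraph (Fin n)) :
    G.edgeFinset ∩ Crs A = G.edgeFinset.filter (fun e => ¬ insideP A e) := by
  ext e
  simp only [Finset.mem_inter, Crs, Finset.mem_filter]
  exact ⟨fun ⟨h1, _, h3⟩ => ⟨h1, h3⟩, fun ⟨h1, h2⟩ => ⟨h1, ⟨edgeFinset_subset_pairs G h1, h2⟩⟩⟩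

lemma card_split (A : Finset (Fin n)) (G : SimpleGraph (Fin n)) :
    (G.edgeFinset ∩ Ins A).card + (G.edgeFinset ∩ Crs A).card = G.edgeFinset.card := by
  rw [edge_inter_Ins, edge_inter_Crs, Finset.card_filter_add_card_filter_not]

lemma mk_out_eq (e : Sym2 (Fin n)) : Sym2.mk.uncurry e.out = e := by
  exact Quot.out_eq e

/-- crossing pairs are at most `n^2 / 4` -/
lemma card_Crs_le (A : Finset (Fin n)) : 4 * (Crs A).card ≤ n ^ 2 := by
  classical
  have hinj : ∀ e : Sym2 (Fin n),
      Sym2.mk.uncurry (if e.out.1 ∈ A then e.out else e.out.swap) = e := by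
    intro e
    split
    · exact mk_out_eq e
    · simp only [Function.uncurry, Prod.fst_swap, Prod.snd_swap]; rw [Sym2.eq_swap]; exact mk_out_eq e
  have hcard : (Crs A).card ≤ (A ×ˢ (Finset.univ \ A)).card := by
    refine Finset.card_le_card_of_injOn
      (fun e => if e.out.1 ∈ A then e.out else e.out.swap) ?_ ?_
    · intro e he
      have hcr : ¬ insideP A e := (Finset.mem_filter.1 he).2
      have hmk : e = s(e.out.1, e.out.2) := by
        conv_lhs => rw [← mk_out_eq e]
        rfl
      rw [hmk, insideP_mk] at hcr
      simp only
      by_cases h1 : e.out.1 ∈ A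
      · rw [if_pos h1]
        refine Finset.mem_product.2 ⟨h1, Finset.mem_sdiff.2 ⟨Finset.mem_univ _, ?_⟩⟩
        tauto
      · rw [if_neg h1]
        refine Finset.mem_product.2 ⟨?_, Finset.mem_sdiff.2 ⟨Finset.mem_univ _, h1⟩⟩
        simp only [Prod.fst_swap]
        tauto
    · intro e _ f _ hef
      have h1 := hinj e
      simp only at hef
      rw [hef] at h1
      rw [← h1, hinj f]
  have hprod : (A ×ˢ (Finset.univ \ A)).card = A.card * (n - A.card) := by
    rw [Finset.card_product, Finset.card_sdiff_of_subset (Finset.subset_univ A), Finset.card_univ,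
      Fintype.card_fin]
  have hA : A.card ≤ n := by
    simpa using Finset.card_le_card (Finset.subset_univ A)
  calc 4 * (Crs A).card ≤ 4 * (A.card * (n - A.card)) := by
        rw [← hprod]
        exact Nat.mul_le_mul_left 4 hcard
    _ ≤ n ^ 2 := four_mul_le _ _ hA




/-- edge coloring induced by a map to the cycle: the "base" vertex of the image edge -/
noncomputable def ecol {m : ℕ} [NeZero m] (f : Fin n → Fin m) : Sym2 (Fin n) → Fin m :=
  Sym2.lift ⟨fun u v =>
    if f v = f u + 1 ∧ ¬ f u = f v + 1 then f u
    else if f u = f v + 1 ∧ ¬ f v = f u + 1 then f v else 0,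
    fun u v => by
      dsimp only
      by_cases h1 : f v = f u + 1 ∧ ¬ f u = f v + 1 <;>
        by_cases h2 : f u = f v + 1 ∧ ¬ f v = f u + 1
      · exact absurd h1.1 h2.2
      · rw [if_pos h1, if_neg h2, if_pos h1]
      · rw [if_neg h1, if_pos h2, if_pos h2]
      · rw [if_neg h1, if_neg h2, if_neg h2, if_neg h1]⟩

lemma ecol_mk {m : ℕ} [NeZero m] (f : Fin n → Fin m) (u v : Fin n) :
    ecol f s(u, v) =
      (if f v = f u + 1 ∧ ¬ f u = f v + 1 then f u
        else if f u = f v + 1 ∧ ¬ f v = f u + 1 then f v else 0) :=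
  Sym2.lift_mk _ u v

lemma hom_gives_cut {ℓ : ℕ} (m1 : ℕ) (hm1 : 1 ≤ m1) (hℓ : m1 ≤ 2 * ℓ)
    (G : SimpleGraph (Fin n)) (f : G →g cycleGraph (2 * ℓ + 1)) :
    ∃ A : Finset (Fin n),
      m1 * (G.edgeFinset ∩ Ins A).card ≤ (G.edgeFinset ∩ Crs A).card := by
  have hm3 : 3 ≤ 2 * ℓ + 1 := by omega
  have hone : ((1 : Fin (2 * ℓ + 1)) : ℕ) = 1 := by
    rw [Fin.val_one']; exact Nat.mod_eq_of_lt (by omega)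
  -- no two vertices of the cycle are mutual successors
  have htwo : ∀ y z : Fin (2 * ℓ + 1), y = z + 1 → z = y + 1 → False := by
    intro y z h1 h2
    rw [h1] at h2
    have h4 : (0 : Fin (2 * ℓ + 1)) = 1 + 1 :=
      add_left_cancel (a := z) (by rw [add_zero, ← add_assoc]; exact h2)
    have h6 := congrArg Fin.val h4
    rw [Fin.val_zero, Fin.val_add, hone, Nat.mod_eq_of_lt (by omega)] at h6
    omega
  -- adjacency in the cycle
  have hadj : ∀ u v, G.Adj u v → f v = f u + 1 ∨ f u = f v + 1 := by
    intro u v h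
    have h2 := f.map_adj h
    rw [SimpleGraph.cycleGraph_adj'] at h2
    rcases h2 with h3 | h3
    · right
      have h4 : f u - f v = 1 := Fin.ext (by rw [hone]; exact h3)
      rw [sub_eq_iff_eq_add] at h4
      rw [h4]; abel
    · left
      have h4 : f v - f u = 1 := Fin.ext (by rw [hone]; exact h3)
      rw [sub_eq_iff_eq_add] at h4
      rw [h4]; abel
  -- fiber counts
  set D : Fin (2 * ℓ + 1) → ℕ :=
    fun j => (G.edgeFinset.filter (fun e => ecol (⇑f) e = j)).card with hD
  have hfib : G.edgeFinset.card = ∑ j : Fin (2 * ℓ + 1), D j :=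
    Finset.card_eq_sum_card_fiberwise (fun e _ => Finset.mem_univ _)
  obtain ⟨j, hj⟩ : ∃ j : Fin (2 * ℓ + 1), (2 * ℓ + 1) * D j ≤ G.edgeFinset.card := by
    by_contra hcon
    push_neg at hcon
    have h2 : ∑ _j : Fin (2 * ℓ + 1), (G.edgeFinset.card + 1)
        ≤ ∑ j : Fin (2 * ℓ + 1), (2 * ℓ + 1) * D j :=
      Finset.sum_le_sum (fun j _ => hcon j)
    rw [Finset.sum_const, Finset.card_univ, Fintype.card_fin, ← Finset.mul_sum, ← hfib,
      smul_eq_mul] at h2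
    nlinarith
  set A : Finset (Fin n) :=
    Finset.univ.filter (fun v : Fin n => ((f v - (j + 1)).val) % 2 = 0) with hA
  have hmemA : ∀ v : Fin n, v ∈ A ↔ ((f v - (j + 1)).val) % 2 = 0 := by
    intro v; rw [hA]; simp
  -- key step
  have hstep : ∀ u v, G.Adj u v → f v = f u + 1 → insideP A s(u, v) →
      ecol (⇑f) s(u, v) = j := by
    intro u v _ h1 hins
    have hne : ¬ f u = f v + 1 := fun h2 => htwo _ _ h1 h2
    rw [ecol_mk, if_pos ⟨h1, hne⟩]
    by_contra hx
    have hxne : f u - (j + 1) ≠ -1 := by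
      intro h
      apply hx
      rw [sub_eq_iff_eq_add] at h
      rw [h]; abel
    have haval : (f u - (j + 1)).val ≠ 2 * ℓ := by
      intro h
      exact hxne (Fin.ext (by rw [Fin.coe_neg_one]; exact h))
    have hb : (f v - (j + 1)).val = (f u - (j + 1)).val + 1 := by
      have h2 : f v - (j + 1) = (f u - (j + 1)) + 1 := by rw [h1]; abel
      rw [h2, Fin.val_add_eq_of_add_lt, hone]
      rw [hone]
      have := (f u - (j + 1)).isLt
      omega
    rw [insideP_mk] at hins
    rw [hmemA u, hmemA v, hb] at hins
    omega
  have hmain : ∀ e ∈ G.edgeFinset, insideP A e → ecol (⇑f) e = j := by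
    intro e
    induction e using Sym2.ind with
    | _ u v =>
      intro he hins
      have hadjuv : G.Adj u v := by
        rw [SimpleGraph.mem_edgeFinset, SimpleGraph.mem_edgeSet] at he
        exact he
      rcases hadj u v hadjuv with h1 | h1
      · exact hstep u v hadjuv h1 hins
      · rw [Sym2.eq_swap] at hins ⊢
        exact hstep v u hadjuv.symm h1 hins
  refine ⟨A, ?_⟩
  have hsub : (G.edgeFinset ∩ Ins A) ⊆ G.edgeFinset.filter (fun e => ecol (⇑f) e = j) := by
    rw [edge_inter_Ins]
    intro e he
    rw [Finset.mem_filter] at he ⊢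
    exact ⟨he.1, hmain e he.1 he.2⟩
  have h1 : (G.edgeFinset ∩ Ins A).card ≤ D j := Finset.card_le_card hsub
  have h2 := card_split A G
  set Xi := (G.edgeFinset ∩ Ins A).card
  set Xr := (G.edgeFinset ∩ Crs A).card
  have h5 : (2 * ℓ + 1) * Xi ≤ Xi + Xr := by
    calc (2 * ℓ + 1) * Xi ≤ (2 * ℓ + 1) * D j := Nat.mul_le_mul_left _ h1
      _ ≤ G.edgeFinset.card := hj
      _ = Xi + Xr := h2.symm
  have h6 : 2 * ℓ * Xi + Xi ≤ Xr + Xi := by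
    calc 2 * ℓ * Xi + Xi = (2 * ℓ + 1) * Xi := by ring
      _ ≤ Xi + Xr := h5
      _ = Xr + Xi := Nat.add_comm _ _
  exact le_trans (Nat.mul_le_mul_right _ hℓ) (Nat.le_of_add_le_add_right h6)



lemma two_mul_choose_two (n : ℕ) : 2 * n.choose 2 = n * (n - 1) := by
  induction n with
  | zero => rfl
  | succ k ih =>
    rw [Nat.choose_succ_succ, Nat.mul_add, ih, Nat.choose_one_right]
    cases k with
    | zero => rfl
    | succ j =>
      simp only [Nat.add_sub_cancel]
      ring

lemma erProb_congr {n : ℕ} {p : ℝ} {P Q : SimpleGraph (Fin n) → Prop}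
    (h : ∀ G, P G ↔ Q G) : erProb n p P = erProb n p Q := by
  rw [erProb_eq, erProb_eq]
  refine Finset.sum_congr rfl fun G _ => ?_
  by_cases hP : P G
  · rw [ind_of_true hP, ind_of_true ((h G).1 hP)]
  · rw [ind_of_false hP, ind_of_false (fun hQ => hP ((h G).2 hQ))]

lemma num1 {c x : ℝ} (hc : 2.774 ≤ c) (hx : 0 ≤ x) :
    x * Real.log 2 + 3 * c * x / 4 - c * x * (2 * Real.log 2) ≤ -x := by
  have l1 := Real.log_two_gt_d9
  have l2 := Real.log_two_lt_d9
  have h3 : (0.6362943606 : ℝ) ≤ 2 * Real.log 2 - 3 / 4 := by linarith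
  have h4 : (2.774 : ℝ) * 0.6362943606 ≤ c * (2 * Real.log 2 - 3 / 4) :=
    mul_le_mul hc h3 (by norm_num) (by linarith)
  have hcoef : Real.log 2 + 1 + c * (3 / 4 - 2 * Real.log 2) ≤ 0 := by nlinarith
  nlinarith [mul_nonpos_of_nonneg_of_nonpos hx hcoef]

lemma num2 {c x : ℝ} (hc : 2.774 ≤ c) (hx : 0 ≤ x) :
    x * Real.log 2 + 20 * Real.log 2 * (c * x / (2 * 10 ^ 8))
      - (1 - 1 / 2 ^ 20) * c * x / 4 ≤ -x / 5000 := by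
  have l1 := Real.log_two_gt_d9
  have l2 := Real.log_two_lt_d9
  have hq : (0.2499996 : ℝ) ≤ (1 - 1 / 2 ^ 20) / 4 - 20 * Real.log 2 / (2 * 10 ^ 8) := by
    norm_num
    linarith
  have h4 : (2.774 : ℝ) * 0.2499996
      ≤ c * ((1 - 1 / 2 ^ 20) / 4 - 20 * Real.log 2 / (2 * 10 ^ 8)) :=
    mul_le_mul hc hq (by norm_num) (by linarith)
  have hcoef : Real.log 2 + 1 / 5000
      + c * (20 * Real.log 2 / (2 * 10 ^ 8) - (1 - 1 / 2 ^ 20) / 4) ≤ 0 := by nlinarith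
  nlinarith [mul_nonpos_of_nonneg_of_nonpos hx hcoef]

lemma main_bound (c : ℝ) (hc : 2.774 < c) (n : ℕ) (hn : Nat.ceil c + 3 ≤ n) :
    erProb n (c / n) (fun G => ¬ ∀ ℓ : ℕ, 10 ^ 8 ≤ ℓ → IsEmpty (G →g cycleGraph (2 * ℓ + 1)))
      ≤ Real.exp (-(n : ℝ)) + Real.exp (c / 2) * Real.exp (-(n : ℝ) / 5000) := by
  have hc0 : (0 : ℝ) < c := by linarith
  have hn3 : 3 ≤ n := by omega
  have hn0 : (0 : ℝ) < (n : ℝ) := by exact_mod_cast Nat.pos_of_ne_zero (by omega)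
  set p : ℝ := c / n with hp
  have hp0 : 0 ≤ p := div_nonneg hc0.le hn0.le
  have hcn : c ≤ (n : ℝ) := by
    have h1 : c ≤ (Nat.ceil c : ℝ) := Nat.le_ceil c
    have h2 : ((Nat.ceil c : ℕ) : ℝ) ≤ (n : ℝ) := by exact_mod_cast (by omega : Nat.ceil c ≤ n)
    linarith
  have hp1 : p ≤ 1 := by rw [hp, div_le_one hn0]; exact hcn
  set u : ℕ := Nat.ceil (c * n) with hu
  set sfl : ℕ := Nat.floor (c * (n : ℝ) / (2 * 10 ^ 8)) with hsfl
  -- deterministic implication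
  have hdet : ∀ G : SimpleGraph (Fin n),
      (¬ ∀ ℓ : ℕ, 10 ^ 8 ≤ ℓ → IsEmpty (G →g cycleGraph (2 * ℓ + 1))) →
      ∃ A : Finset (Fin n),
        (u ≤ (G.edgeFinset ∩ Crs A).card ∨ (G.edgeFinset ∩ Ins A).card ≤ sfl) := by
    intro G hG
    push_neg at hG
    obtain ⟨ℓ, hℓ, hne⟩ := hG
    obtain ⟨f⟩ := hne
    obtain ⟨A, hcut⟩ := hom_gives_cut (2 * 10 ^ 8) (by norm_num) (by omega) G f
    refine ⟨A, ?_⟩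
    by_cases h1 : u ≤ (G.edgeFinset ∩ Crs A).card
    · exact Or.inl h1
    · right
      have h2 : ((G.edgeFinset ∩ Crs A).card : ℝ) < c * n := by
        rw [← Nat.lt_ceil]; omega
      refine Nat.le_floor ?_
      have h3 : ((2 * 10 ^ 8 : ℕ) : ℝ) * ((G.edgeFinset ∩ Ins A).card : ℝ)
          ≤ ((G.edgeFinset ∩ Crs A).card : ℝ) := by exact_mod_cast hcut
      rw [le_div_iff₀ (by norm_num : (0:ℝ) < 2 * 10 ^ 8)]
      have h4 : ((2 * 10 ^ 8 : ℕ) : ℝ) = (2 * 10 ^ 8 : ℝ) := by norm_num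
      nlinarith
  -- per-partition bounds
  have hperA : ∀ A : Finset (Fin n),
      erProb n p (fun G =>
          u ≤ (G.edgeFinset ∩ Crs A).card ∨ (G.edgeFinset ∩ Ins A).card ≤ sfl)
        ≤ Real.exp (3 * c * n / 4 - u * (2 * Real.log 2))
          + Real.exp (20 * Real.log 2 * (c * n / (2 * 10 ^ 8))
              - (1 - 1 / 2 ^ 20) * c * ((n : ℝ) - 2) / 4) := by
    intro A
    have hOr := erProb_or hp0 hp1
      (fun G => u ≤ (G.edgeFinset ∩ Crs A).card)
      (fun G => (G.edgeFinset ∩ Ins A).card ≤ sfl)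
    have hE1 : erProb n p (fun G => u ≤ (G.edgeFinset ∩ Crs A).card)
        ≤ Real.exp (3 * c * n / 4 - u * (2 * Real.log 2)) := by
      refine le_trans (tail_upper hp0 hp1 (Crs_subset A) (by norm_num : (1:ℝ) ≤ 4) u) ?_
      have hk4 : 4 * (Crs A).card ≤ n ^ 2 := card_Crs_le A
      have hkr : ((Crs A).card : ℝ) ≤ (n : ℝ) ^ 2 / 4 := by
        have h5 : ((4 * (Crs A).card : ℕ) : ℝ) ≤ (((n^2 : ℕ)) : ℝ) := by exact_mod_cast hk4
        push_cast at h5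
        linarith
      have hb2 : (1 + 3 * p : ℝ) ≤ Real.exp (3 * p) := by
        have := Real.add_one_le_exp (3 * p); linarith
      have hb3 : (4 * p + (1 - p)) ^ (Crs A).card
          ≤ Real.exp (((Crs A).card : ℝ) * (3 * p)) := by
        rw [show (4 * p + (1 - p)) = 1 + 3 * p by ring, Real.exp_nat_mul]
        exact pow_le_pow_left₀ (by linarith) hb2 _
      have hb4 : ((Crs A).card : ℝ) * (3 * p) ≤ 3 * c * n / 4 := by
        have h5 : (0:ℝ) ≤ 3 * p := by linarith
        have h6 : ((Crs A).card : ℝ) * (3 * p) ≤ ((n : ℝ) ^ 2 / 4) * (3 * p) :=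
          mul_le_mul_of_nonneg_right hkr h5
        have h7 : ((n : ℝ) ^ 2 / 4) * (3 * p) = 3 * c * n / 4 := by
          rw [hp]; field_simp
        linarith
      have hb5 : (4 : ℝ) ^ u = Real.exp ((u : ℝ) * (2 * Real.log 2)) := by
        rw [Real.exp_nat_mul]
        congr 1
        rw [show (2 : ℝ) * Real.log 2 = Real.log 4 by
          rw [show (4:ℝ) = 2 ^ 2 by norm_num, Real.log_pow]; push_cast; ring]
        rw [Real.exp_log (by norm_num)]
      rw [hb5, Real.exp_sub]
      have hnum : (4 * p + (1 - p)) ^ (Crs A).card ≤ Real.exp (3 * c * n / 4) :=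
        le_trans hb3 (Real.exp_le_exp.2 hb4)
      gcongr
    have hE2 : erProb n p (fun G => (G.edgeFinset ∩ Ins A).card ≤ sfl)
        ≤ Real.exp (20 * Real.log 2 * (c * n / (2 * 10 ^ 8))
            - (1 - 1 / 2 ^ 20) * c * ((n : ℝ) - 2) / 4) := by
      have hmu0 : (0:ℝ) < 1 / 2 ^ 20 := by norm_num
      have hmu1 : (1 / 2 ^ 20 : ℝ) ≤ 1 := by norm_num
      refine le_trans (tail_lower hp0 hp1 (Ins_subset A) hmu0 hmu1 sfl) ?_
      have hIns : ((n:ℝ) ^ 2 - 2 * n) / 4 ≤ ((Ins A).card : ℝ) := by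
        have h1 := Ins_card_add_Crs_card A
        have h2 := two_mul_choose_two n
        have h3 : 4 * (Crs A).card ≤ n ^ 2 := card_Crs_le A
        have h4 : 2 * ((Ins A).card + (Crs A).card) = n * (n - 1) := by rw [h1, h2]
        have h5 : ((n - 1 : ℕ) : ℝ) = (n:ℝ) - 1 := by
          rw [Nat.cast_sub (by omega)]; norm_num
        have h6 : 2 * (((Ins A).card : ℝ) + ((Crs A).card : ℝ)) = (n:ℝ) * ((n:ℝ) - 1) := by
          rw [← h5]; exact_mod_cast h4
        have h7 : (4:ℝ) * ((Crs A).card : ℝ) ≤ ((n:ℝ)) ^ 2 := by exact_mod_cast h3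
        nlinarith
      set b : ℝ := (1 / 2 ^ 20) * p + (1 - p) with hbdef
      have hb0 : 0 ≤ b := by rw [hbdef]; nlinarith
      have hble : b ≤ Real.exp (-(p * (1 - 1 / 2 ^ 20))) := by
        have := Real.add_one_le_exp (-(p * (1 - 1 / 2 ^ 20)))
        rw [hbdef]; nlinarith
      have hpow : b ^ (Ins A).card
          ≤ Real.exp (((Ins A).card : ℝ) * -(p * (1 - 1 / 2 ^ 20))) := by
        rw [Real.exp_nat_mul]
        exact pow_le_pow_left₀ hb0 hble _
      have hexp2 : ((Ins A).card : ℝ) * -(p * (1 - 1 / 2 ^ 20))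
          ≤ -((1 - 1 / 2 ^ 20) * c * ((n:ℝ) - 2) / 4) := by
        have hx : (0:ℝ) ≤ p * (1 - 1 / 2 ^ 20) := by nlinarith
        have h8 : p * (1 - 1 / 2 ^ 20) * (((n:ℝ) ^ 2 - 2 * n) / 4)
            ≤ p * (1 - 1 / 2 ^ 20) * ((Ins A).card : ℝ) :=
          mul_le_mul_of_nonneg_left hIns hx
        have h9 : p * (1 - 1 / 2 ^ 20) * (((n:ℝ) ^ 2 - 2 * n) / 4)
            = (1 - 1 / 2 ^ 20) * c * ((n:ℝ) - 2) / 4 := by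
          rw [hp]; field_simp
        nlinarith
      have hKpow : ((2:ℝ) ^ 20) ^ sfl
          ≤ Real.exp (20 * Real.log 2 * (c * n / (2 * 10 ^ 8))) := by
        have h10 : ((2:ℝ) ^ 20) ^ sfl = Real.exp ((sfl : ℝ) * (20 * Real.log 2)) := by
          rw [Real.exp_nat_mul]
          congr 1
          rw [show (20:ℝ) * Real.log 2 = Real.log (2 ^ 20) by
            rw [Real.log_pow]; push_cast; ring]
          rw [Real.exp_log (by norm_num)]
        have h11 : (sfl : ℝ) ≤ c * n / (2 * 10 ^ 8) := Nat.floor_le (by positivity)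
        rw [h10]
        apply Real.exp_le_exp.2
        have h12 : (0:ℝ) ≤ 20 * Real.log 2 := by
          have := Real.log_nonneg (by norm_num : (1:ℝ) ≤ 2); linarith
        nlinarith
      have hsplit : b ^ (Ins A).card / ((1:ℝ) / 2 ^ 20) ^ sfl
          = b ^ (Ins A).card * ((2:ℝ) ^ 20) ^ sfl := by
        rw [div_pow, one_pow]; field_simp
      rw [hsplit]
      calc b ^ (Ins A).card * ((2:ℝ) ^ 20) ^ sfl
          ≤ Real.exp (((Ins A).card : ℝ) * -(p * (1 - 1 / 2 ^ 20)))
            * Real.exp (20 * Real.log 2 * (c * n / (2 * 10 ^ 8))) :=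
            mul_le_mul hpow hKpow (by positivity) (Real.exp_pos _).le
        _ ≤ _ := by
            rw [← Real.exp_add]
            apply Real.exp_le_exp.2
            linarith
    exact le_trans hOr (add_le_add hE1 hE2)
  -- assemble
  have step1 : erProb n p
      (fun G => ¬ ∀ ℓ : ℕ, 10 ^ 8 ≤ ℓ → IsEmpty (G →g cycleGraph (2 * ℓ + 1)))
      ≤ erProb n p (fun G => ∃ A : Finset (Fin n),
          u ≤ (G.edgeFinset ∩ Crs A).card ∨ (G.edgeFinset ∩ Ins A).card ≤ sfl) :=
    erProb_mono hp0 hp1 hdet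
  have step2 := erProb_exists hp0 hp1
    (fun (A : Finset (Fin n)) (G : SimpleGraph (Fin n)) =>
      u ≤ (G.edgeFinset ∩ Crs A).card ∨ (G.edgeFinset ∩ Ins A).card ≤ sfl)
  have step3 : ∑ A : Finset (Fin n), erProb n p (fun G =>
        u ≤ (G.edgeFinset ∩ Crs A).card ∨ (G.edgeFinset ∩ Ins A).card ≤ sfl)
      ≤ (2:ℝ) ^ n * (Real.exp (3 * c * n / 4 - u * (2 * Real.log 2))
          + Real.exp (20 * Real.log 2 * (c * n / (2 * 10 ^ 8))
              - (1 - 1 / 2 ^ 20) * c * ((n : ℝ) - 2) / 4)) := by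
    refine le_trans (Finset.sum_le_sum (fun A _ => hperA A)) ?_
    rw [Finset.sum_const, Finset.card_univ, Fintype.card_finset, Fintype.card_fin,
      nsmul_eq_mul]
    exact le_of_eq (by push_cast; ring)
  have h2n : ((2:ℝ)) ^ n = Real.exp ((n:ℝ) * Real.log 2) := by
    rw [Real.exp_nat_mul, Real.exp_log (by norm_num : (0:ℝ) < 2)]
  have hfinal1 : (2:ℝ) ^ n * Real.exp (3 * c * n / 4 - u * (2 * Real.log 2))
      ≤ Real.exp (-(n:ℝ)) := by
    rw [h2n, ← Real.exp_add]
    apply Real.exp_le_exp.2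
    have hucn : c * (n:ℝ) ≤ (u : ℝ) := Nat.le_ceil _
    have hlog2 : (0:ℝ) ≤ 2 * Real.log 2 := by
      have := Real.log_nonneg (by norm_num : (1:ℝ) ≤ 2); linarith
    have h13 : c * (n:ℝ) * (2 * Real.log 2) ≤ (u:ℝ) * (2 * Real.log 2) :=
      mul_le_mul_of_nonneg_right hucn hlog2
    have h14 := num1 (c := c) (x := (n:ℝ)) hc.le hn0.le
    linarith
  have hfinal2 : (2:ℝ) ^ n * Real.exp (20 * Real.log 2 * (c * n / (2 * 10 ^ 8))
        - (1 - 1 / 2 ^ 20) * c * ((n : ℝ) - 2) / 4)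
      ≤ Real.exp (c / 2) * Real.exp (-(n:ℝ) / 5000) := by
    rw [h2n, ← Real.exp_add, ← Real.exp_add]
    apply Real.exp_le_exp.2
    have h14 := num2 (c := c) (x := (n:ℝ)) hc.le hn0.le
    nlinarith
  calc (erProb n p
      (fun G => ¬ ∀ ℓ : ℕ, 10 ^ 8 ≤ ℓ → IsEmpty (G →g cycleGraph (2 * ℓ + 1))))
      ≤ ∑ A : Finset (Fin n), erProb n p (fun G =>
          u ≤ (G.edgeFinset ∩ Crs A).card ∨ (G.edgeFinset ∩ Ins A).card ≤ sfl) :=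
        le_trans step1 step2
    _ ≤ (2:ℝ) ^ n * (Real.exp (3 * c * n / 4 - u * (2 * Real.log 2))
          + Real.exp (20 * Real.log 2 * (c * n / (2 * 10 ^ 8))
              - (1 - 1 / 2 ^ 20) * c * ((n : ℝ) - 2) / 4)) := step3
    _ = (2:ℝ) ^ n * Real.exp (3 * c * n / 4 - u * (2 * Real.log 2))
          + (2:ℝ) ^ n * Real.exp (20 * Real.log 2 * (c * n / (2 * 10 ^ 8))
              - (1 - 1 / 2 ^ 20) * c * ((n : ℝ) - 2) / 4) := by ring
    _ ≤ Real.exp (-(n:ℝ)) + Real.exp (c / 2) * Real.exp (-(n:ℝ) / 5000) :=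
        add_le_add hfinal1 hfinal2

end ERhom

namespace ERhom

lemma tendsto_aux (c : ℝ) :
    Filter.Tendsto (fun n : ℕ => Real.exp (-(n:ℝ)) + Real.exp (c/2) * Real.exp (-(n:ℝ)/5000))
      Filter.atTop (nhds 0) := by
  have h1 : Filter.Tendsto (fun n : ℕ => Real.exp (-(n:ℝ))) Filter.atTop (nhds 0) := by
    have heq : ∀ n : ℕ, Real.exp (-(n:ℝ)) = (Real.exp (-1)) ^ n := fun n => by
      rw [← Real.exp_nat_mul]; norm_num
    refine (tendsto_pow_atTop_nhds_zero_of_lt_one (Real.exp_pos _).le ?_).congr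
      (fun n => (heq n).symm)
    rw [show (1:ℝ) = Real.exp 0 by rw [Real.exp_zero]]
    exact Real.exp_lt_exp.2 (by norm_num)
  have h2 : Filter.Tendsto (fun n : ℕ => Real.exp (-(n:ℝ)/5000)) Filter.atTop (nhds 0) := by
    have heq : ∀ n : ℕ, Real.exp (-(n:ℝ)/5000) = (Real.exp (-1/5000)) ^ n := fun n => by
      rw [← Real.exp_nat_mul]; ring_nf
    refine (tendsto_pow_atTop_nhds_zero_of_lt_one (Real.exp_pos _).le ?_).congr
      (fun n => (heq n).symm)
    rw [show (1:ℝ) = Real.exp 0 by rw [Real.exp_zero]]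
    exact Real.exp_lt_exp.2 (by norm_num)
  have := h1.add (h2.const_mul (Real.exp (c/2)))
  simpa using this

end ERhom

/-- For every real `c > 2.774` there exists `ℓ_c` such that w.h.p. there is no homomorphism
from `G_{n,c/n}` to `C_{2ℓ+1}` for every `ℓ ≥ ℓ_c`. -/
theorem statement1 (c : ℝ) (hc : 2.774 < c) :
    ∃ ℓc : ℕ,
      Tendsto
        (fun n : ℕ => erProb n (c / n) (fun G =>
          ∀ ℓ : ℕ, ℓc ≤ ℓ → IsEmpty (G →g cycleGraph (2 * ℓ + 1))))
        atTop (nhds 1) := by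
  refine ⟨10 ^ 8, ?_⟩
  have hc0 : (0:ℝ) < c := by linarith
  set t : ℕ → ℝ :=
    fun n => Real.exp (-(n:ℝ)) + Real.exp (c/2) * Real.exp (-(n:ℝ)/5000) with ht
  have hkey : ∀ n : ℕ, Nat.ceil c + 3 ≤ n →
      1 - t n ≤ erProb n (c / n) (fun G =>
          ∀ ℓ : ℕ, 10 ^ 8 ≤ ℓ → IsEmpty (G →g cycleGraph (2 * ℓ + 1)))
        ∧ erProb n (c / n) (fun G =>
          ∀ ℓ : ℕ, 10 ^ 8 ≤ ℓ → IsEmpty (G →g cycleGraph (2 * ℓ + 1))) ≤ 1 := by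
    intro n hn
    have hn0 : (0 : ℝ) < (n : ℝ) := by
      exact_mod_cast Nat.pos_of_ne_zero (by omega)
    have hp0 : 0 ≤ c / n := div_nonneg hc0.le hn0.le
    have hp1 : c / n ≤ 1 := by
      rw [div_le_one hn0]
      have h1 : c ≤ (Nat.ceil c : ℝ) := Nat.le_ceil c
      have h2 : ((Nat.ceil c : ℕ) : ℝ) ≤ (n : ℝ) := by
        exact_mod_cast (by omega : Nat.ceil c ≤ n)
      linarith
    have hcompl := ERhom.erProb_add_compl (n := n) (p := c / n)
      (fun G => ∀ ℓ : ℕ, 10 ^ 8 ≤ ℓ → IsEmpty (G →g cycleGraph (2 * ℓ + 1)))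
    have hbad := ERhom.main_bound c hc n hn
    constructor
    · linarith
    · exact ERhom.erProb_le_one hp0 hp1 _
  have htt := ERhom.tendsto_aux c
  have hlow : Tendsto (fun n : ℕ => 1 - t n) atTop (nhds 1) := by
    have := tendsto_const_nhds (x := (1:ℝ)) (f := atTop (α := ℕ)) |>.sub htt
    simpa using this
  refine tendsto_of_tendsto_of_tendsto_of_le_of_le' hlow tendsto_const_nhds ?_ ?_
  · filter_upwards [Filter.eventually_ge_atTop (Nat.ceil c + 3)] with n hn
    exact (hkey n hn).1
  · filter_upwards [Filter.eventually_ge_atTop (Nat.ceil c + 3)] with n hn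
    exact (hkey n hn).2
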